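/- For every integer k ≥ 4, the Toeplitz graph T_{2^k}⟨{1, 2^{k−2}, 2^{k−1}}⟩ satisfies 2^k/(2^k−2) ≤ ldim_f(T_{2^k}⟨{1, 2^{k−2}, 2^{k−1}}⟩) ≤ 2^k/8 = 2^{k−3}. -/

import Mathlib

open Finset

/-- A local resolving function of a graph `G`: a map `ζ : V → [0,1]` such that for every
pair of adjacent vertices `u v`, the sum of `ζ` over the local resolving neighborhood
`R{u,v} = {w : d(w,u) ≠ d(w,v)}` is at least `1`. -/
def IsLocalResolvingFunction {V : Type*} [Fintype V] (G : SimpleGraph V) (ζ : V → ℝ) : Prop :=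
  (∀ w, ζ w ∈ Set.Icc (0 : ℝ) 1) ∧
    ∀ u v, G.Adj u v →
      1 ≤ ∑ w ∈ Finset.univ.filter (fun w => G.dist w u ≠ G.dist w v), ζ w

/-- The local fractional metric dimension of `G`: the minimum of `∑ v, ζ v` over all
local resolving functions `ζ` of `G`. -/
noncomputable def ldimf {V : Type*} [Fintype V] (G : SimpleGraph V) : ℝ :=
  sInf {s : ℝ | ∃ ζ : V → ℝ, IsLocalResolvingFunction G ζ ∧ s = ∑ v, ζ v}

/-- The Toeplitz graph `T_n⟨S⟩` (vertices `0, …, n-1` standing for `1, …, n`):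
two distinct vertices are adjacent iff their absolute difference lies in `S`. -/
def toeplitzGraph (n : ℕ) (S : Set ℕ) : SimpleGraph (Fin n) where
  Adj p q := p ≠ q ∧ Nat.dist (p : ℕ) (q : ℕ) ∈ S
  symm := ⟨fun p q ⟨h1, h2⟩ => ⟨h1.symm, by rwa [Nat.dist_comm]⟩⟩
  loopless := ⟨fun p ⟨h, _⟩ => h rfl⟩

namespace LdimfAux

/-! ### Generic distance lemmas -/

lemma dist_two {V : Type*} {G : SimpleGraph V} {a z b : V}
    (h1 : G.Adj a z) (h2 : G.Adj z b) (hnadj : ¬ G.Adj a b) (hne : a ≠ b) :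
    G.dist a b = 2 := by
  have hle : G.dist a b ≤ 2 := by
    have := SimpleGraph.dist_le (SimpleGraph.Walk.cons h1 h2.toWalk)
    simpa using this
  have h0 : G.dist a b ≠ 0 := by
    intro hzero
    rcases SimpleGraph.dist_eq_zero_iff_eq_or_not_reachable.1 hzero with h | h
    · exact hne h
    · exact h ⟨SimpleGraph.Walk.cons h1 h2.toWalk⟩
  have h1' : G.dist a b ≠ 1 := fun h => hnadj (SimpleGraph.dist_eq_one_iff_adj.1 h)
  omega

lemma dist_ne_two {V : Type*} {G : SimpleGraph V} {a b : V}
    (h : ∀ z, ¬ (G.Adj a z ∧ G.Adj z b)) : G.dist a b ≠ 2 := by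
  intro h2
  have hr : G.Reachable a b := SimpleGraph.Reachable.of_dist_ne_zero (by omega)
  obtain ⟨p, hp⟩ := hr.exists_walk_length_eq_dist
  rw [h2] at hp
  cases p with
  | nil => simp at hp
  | cons h' q =>
    cases q with
    | nil => simp at hp
    | cons h'' q' =>
      cases q' with
      | nil => exact h _ ⟨h', h''⟩
      | cons h''' q'' => simp [SimpleGraph.Walk.length_cons] at hp

/-! ### The Toeplitz graph `T_{4m}⟨{1, m, 2m}⟩` -/

/-- abbreviation for our graph -/
def TG (m N : ℕ) : SimpleGraph (Fin N) := toeplitzGraph N {1, m, 2*m}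

/-- the linking relation: difference 1, m or 2m -/
def lk (m x y : ℕ) : Prop :=
  x + 1 = y ∨ y + 1 = x ∨ x + m = y ∨ y + m = x ∨ x + 2*m = y ∨ y + 2*m = x

variable {m N : ℕ}

lemma adj_iff {a b : Fin N} :
    (TG m N).Adj a b ↔ ((a : ℕ) ≠ (b : ℕ) ∧ lk m (a : ℕ) (b : ℕ)) := by
  show ((a ≠ b) ∧ Nat.dist (a : ℕ) (b : ℕ) ∈ ({1, m, 2*m} : Set ℕ)) ↔ _
  rw [Ne, Fin.ext_iff]
  simp only [Set.mem_insert_iff, Set.mem_singleton_iff, Nat.dist, lk]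
  omega

lemma not_adj {a b : Fin N} (h : ¬ lk m (a : ℕ) (b : ℕ)) : ¬ (TG m N).Adj a b :=
  fun hh => h ((adj_iff.1 hh).2)

lemma adj_of {a b : Fin N} (h : (a : ℕ) ≠ (b : ℕ) ∧ lk m (a : ℕ) (b : ℕ)) :
    (TG m N).Adj a b := adj_iff.2 h

lemma d1 {a b : Fin N} (h : (a : ℕ) ≠ (b : ℕ) ∧ lk m (a : ℕ) (b : ℕ)) :
    (TG m N).dist a b = 1 := SimpleGraph.dist_eq_one_iff_adj.2 (adj_of h)

lemma d2 {a b : Fin N} (z : ℕ) (hz : z < N)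
    (h1 : (a : ℕ) ≠ z ∧ lk m (a : ℕ) z) (h2 : z ≠ (b : ℕ) ∧ lk m z (b : ℕ))
    (h3 : ¬ lk m (a : ℕ) (b : ℕ)) (h3n : (a : ℕ) ≠ (b : ℕ)) :
    (TG m N).dist a b = 2 :=
  dist_two (z := (⟨z, hz⟩ : Fin N)) (adj_of h1) (adj_of h2) (not_adj h3)
    (Fin.ne_of_val_ne h3n)

lemma dnot2 {a b : Fin N} (h : ∀ y : ℕ, ¬ (lk m (a : ℕ) y ∧ lk m y (b : ℕ))) :
    (TG m N).dist a b ≠ 2 :=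
  dist_ne_two (fun z hz => h (z : ℕ) ⟨(adj_iff.1 hz.1).2, (adj_iff.1 hz.2).2⟩)

/-! ### Certificates for membership in the local resolving neighborhood -/

section Certs

variable {w u v : Fin N}

/-- `w` adjacent to `u` but not to `v`. -/
lemma certA (h1 : (w : ℕ) ≠ (u : ℕ) ∧ lk m (w : ℕ) (u : ℕ)) (h2 : ¬ lk m (w : ℕ) (v : ℕ)) :
    (TG m N).dist w u ≠ (TG m N).dist w v := by
  have e1 : (TG m N).dist w u = 1 := d1 h1
  have e2 : (TG m N).dist w v ≠ 1 :=
    fun h => h2 ((adj_iff.1 (SimpleGraph.dist_eq_one_iff_adj.1 h)).2)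
  omega

/-- `w` adjacent to `v` but not to `u`. -/
lemma certA' (h1 : ¬ lk m (w : ℕ) (u : ℕ)) (h2 : (w : ℕ) ≠ (v : ℕ) ∧ lk m (w : ℕ) (v : ℕ)) :
    (TG m N).dist w u ≠ (TG m N).dist w v := by
  have e1 : (TG m N).dist w v = 1 := d1 h2
  have e2 : (TG m N).dist w u ≠ 1 :=
    fun h => h1 ((adj_iff.1 (SimpleGraph.dist_eq_one_iff_adj.1 h)).2)
  omega

/-- `w = u`. -/
lemma certB (h : (u : ℕ) ≠ (v : ℕ) ∧ lk m (u : ℕ) (v : ℕ)) :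
    (TG m N).dist u u ≠ (TG m N).dist u v := by
  have e1 : (TG m N).dist u u = 0 := SimpleGraph.dist_self
  have e2 : (TG m N).dist u v = 1 := d1 h
  omega

/-- `w = v`. -/
lemma certB' (h : (u : ℕ) ≠ (v : ℕ) ∧ lk m (u : ℕ) (v : ℕ)) :
    (TG m N).dist v u ≠ (TG m N).dist v v := by
  have e1 : (TG m N).dist v v = 0 := SimpleGraph.dist_self
  have e2 : (TG m N).dist v u = 1 := by
    rw [SimpleGraph.dist_comm]
    exact d1 h
  omega

/-- `w` at distance 2 from `u` (via `z`), and surely not at distance 2 from `v`. -/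
lemma certC (z : ℕ) (hz : z < N)
    (h1 : (w : ℕ) ≠ z ∧ lk m (w : ℕ) z) (h2 : z ≠ (u : ℕ) ∧ lk m z (u : ℕ))
    (h3 : ¬ lk m (w : ℕ) (u : ℕ)) (h3n : (w : ℕ) ≠ (u : ℕ))
    (h5 : ∀ y : ℕ, ¬ (lk m (w : ℕ) y ∧ lk m y (v : ℕ))) :
    (TG m N).dist w u ≠ (TG m N).dist w v := by
  have e1 : (TG m N).dist w u = 2 := d2 z hz h1 h2 h3 h3n
  have e2 : (TG m N).dist w v ≠ 2 := dnot2 h5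
  omega

/-- `w` at distance 2 from `v` (via `z`), and surely not at distance 2 from `u`. -/
lemma certC' (z : ℕ) (hz : z < N)
    (h1 : (w : ℕ) ≠ z ∧ lk m (w : ℕ) z) (h2 : z ≠ (v : ℕ) ∧ lk m z (v : ℕ))
    (h3 : ¬ lk m (w : ℕ) (v : ℕ)) (h3n : (w : ℕ) ≠ (v : ℕ))
    (h5 : ∀ y : ℕ, ¬ (lk m (w : ℕ) y ∧ lk m y (u : ℕ))) :
    (TG m N).dist w u ≠ (TG m N).dist w v := by
  have e1 : (TG m N).dist w v = 2 := d2 z hz h1 h2 h3 h3n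
  have e2 : (TG m N).dist w u ≠ 2 := dnot2 h5
  omega

end Certs

/-! ### Eight vertices in every local resolving neighborhood -/

lemma card8 (u v : Fin N) (a0 a1 a2 a3 a4 a5 a6 a7 : ℕ)
    (hord : a0 < a1 ∧ a1 < a2 ∧ a2 < a3 ∧ a3 < a4 ∧ a4 < a5 ∧ a5 < a6 ∧ a6 < a7)
    (hlt : a7 < N)
    (hmem : ∀ w : Fin N,
      ((w : ℕ) = a0 ∨ (w : ℕ) = a1 ∨ (w : ℕ) = a2 ∨ (w : ℕ) = a3 ∨ (w : ℕ) = a4 ∨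
        (w : ℕ) = a5 ∨ (w : ℕ) = a6 ∨ (w : ℕ) = a7) →
      (TG m N).dist w u ≠ (TG m N).dist w v) :
    8 ≤ (Finset.univ.filter
      (fun w => (TG m N).dist w u ≠ (TG m N).dist w v)).card := by
  obtain ⟨h01, h12, h23, h34, h45, h56, h67⟩ := hord
  have hTlt : ∀ x ∈ ({a0, a1, a2, a3, a4, a5, a6, a7} : Finset ℕ), x < N := by
    intro x hx
    simp only [Finset.mem_insert, Finset.mem_singleton] at hx
    omega
  have n7 : a6 ∉ ({a7} : Finset ℕ) := by
    simp only [Finset.mem_singleton]; omega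
  have n6 : a5 ∉ ({a6, a7} : Finset ℕ) := by
    simp only [Finset.mem_insert, Finset.mem_singleton]; omega
  have n5 : a4 ∉ ({a5, a6, a7} : Finset ℕ) := by
    simp only [Finset.mem_insert, Finset.mem_singleton]; omega
  have n4 : a3 ∉ ({a4, a5, a6, a7} : Finset ℕ) := by
    simp only [Finset.mem_insert, Finset.mem_singleton]; omega
  have n3 : a2 ∉ ({a3, a4, a5, a6, a7} : Finset ℕ) := by
    simp only [Finset.mem_insert, Finset.mem_singleton]; omega
  have n2 : a1 ∉ ({a2, a3, a4, a5, a6, a7} : Finset ℕ) := by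
    simp only [Finset.mem_insert, Finset.mem_singleton]; omega
  have n1 : a0 ∉ ({a1, a2, a3, a4, a5, a6, a7} : Finset ℕ) := by
    simp only [Finset.mem_insert, Finset.mem_singleton]; omega
  have hcard : ({a0, a1, a2, a3, a4, a5, a6, a7} : Finset ℕ).card = 8 := by
    rw [Finset.card_insert_of_notMem n1, Finset.card_insert_of_notMem n2,
      Finset.card_insert_of_notMem n3, Finset.card_insert_of_notMem n4,
      Finset.card_insert_of_notMem n5, Finset.card_insert_of_notMem n6,
      Finset.card_insert_of_notMem n7, Finset.card_singleton]
  have hsub : ({a0, a1, a2, a3, a4, a5, a6, a7} : Finset ℕ).attachFin hTlt ⊆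
      Finset.univ.filter (fun w => (TG m N).dist w u ≠ (TG m N).dist w v) := by
    intro w hw
    rw [Finset.mem_attachFin] at hw
    simp only [Finset.mem_insert, Finset.mem_singleton] at hw
    exact Finset.mem_filter.2 ⟨Finset.mem_univ _, hmem w hw⟩
  have := Finset.card_le_card hsub
  rwa [Finset.card_attachFin, hcard] at this

set_option maxHeartbeats 3000000 in
lemma eight_le_aux (hm : 4 ≤ m) (hN : N = 4*m) (u v : Fin N)
    (hlt : (u : ℕ) < (v : ℕ))
    (hd : (u : ℕ) + 1 = (v : ℕ) ∨ (u : ℕ) + m = (v : ℕ) ∨ (u : ℕ) + 2*m = (v : ℕ)) :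
    8 ≤ (Finset.univ.filter
      (fun w => (TG m N).dist w u ≠ (TG m N).dist w v)).card := by
  have hub := u.isLt
  have hvb := v.isLt
  rcases hd with hd | hd | hd
  · -- v = u + 1
    rcases lt_or_ge (u : ℕ) (2*m) with hc | hc
    · -- u ≤ 2m - 1
      refine card8 u v (u:ℕ) ((u:ℕ)+1) ((u:ℕ)+2) ((u:ℕ)+m) ((u:ℕ)+m+1) ((u:ℕ)+m+2)
          ((u:ℕ)+2*m-1) ((u:ℕ)+2*m) (by omega) (by omega) ?_
      intro w hw
      rcases hw with h | h | h | h | h | h | h | h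
      · have hwu : w = u := Fin.ext h
        subst hwu
        exact certB ⟨by omega, by unfold lk; omega⟩
      · have hwv : w = v := Fin.ext (by omega)
        subst hwv
        exact certB' ⟨by omega, by unfold lk; omega⟩
      · exact certA' (by unfold lk; omega) ⟨by omega, by unfold lk; omega⟩
      · exact certA ⟨by omega, by unfold lk; omega⟩ (by unfold lk; omega)
      · exact certA' (by unfold lk; omega) ⟨by omega, by unfold lk; omega⟩
      · exact certC' ((u:ℕ)+m+1) (by omega) ⟨by omega, by unfold lk; omega⟩
          ⟨by omega, by unfold lk; omega⟩ (by unfold lk; omega) (by omega)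
          (by intro y; unfold lk; omega)
      · exact certC ((u:ℕ)+2*m) (by omega) ⟨by omega, by unfold lk; omega⟩
          ⟨by omega, by unfold lk; omega⟩ (by unfold lk; omega) (by omega)
          (by intro y; unfold lk; omega)
      · exact certA ⟨by omega, by unfold lk; omega⟩ (by unfold lk; omega)
    · -- u ≥ 2m
      refine card8 u v ((u:ℕ)+1-2*m) ((u:ℕ)+2-2*m) ((u:ℕ)-m-1) ((u:ℕ)-m) ((u:ℕ)+1-m)
          ((u:ℕ)-1) (u:ℕ) ((u:ℕ)+1) (by omega) (by omega) ?_
      intro w hw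
      rcases hw with h | h | h | h | h | h | h | h
      · exact certA' (by unfold lk; omega) ⟨by omega, by unfold lk; omega⟩
      · exact certC' ((u:ℕ)+1-2*m) (by omega) ⟨by omega, by unfold lk; omega⟩
          ⟨by omega, by unfold lk; omega⟩ (by unfold lk; omega) (by omega)
          (by intro y; unfold lk; omega)
      · exact certC ((u:ℕ)-1) (by omega) ⟨by omega, by unfold lk; omega⟩
          ⟨by omega, by unfold lk; omega⟩ (by unfold lk; omega) (by omega)
          (by intro y; unfold lk; omega)
      · exact certA ⟨by omega, by unfold lk; omega⟩ (by unfold lk; omega)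
      · exact certA' (by unfold lk; omega) ⟨by omega, by unfold lk; omega⟩
      · exact certA ⟨by omega, by unfold lk; omega⟩ (by unfold lk; omega)
      · have hwu : w = u := Fin.ext h
        subst hwu
        exact certB ⟨by omega, by unfold lk; omega⟩
      · have hwv : w = v := Fin.ext (by omega)
        subst hwv
        exact certB' ⟨by omega, by unfold lk; omega⟩
  · -- v = u + m
    rcases lt_or_ge (u : ℕ) m with hc | hc
    · -- u ≤ m-1
      refine card8 u v (u:ℕ) ((u:ℕ)+1) ((u:ℕ)+m-1) ((u:ℕ)+m) ((u:ℕ)+m+1) ((u:ℕ)+m+2)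
          ((u:ℕ)+3*m-1) ((u:ℕ)+3*m) (by omega) (by omega) ?_
      intro w hw
      rcases hw with h | h | h | h | h | h | h | h
      · have hwu : w = u := Fin.ext h
        subst hwu
        exact certB ⟨by omega, by unfold lk; omega⟩
      · exact certA ⟨by omega, by unfold lk; omega⟩ (by unfold lk; omega)
      · exact certA' (by unfold lk; omega) ⟨by omega, by unfold lk; omega⟩
      · have hwv : w = v := Fin.ext (by omega)
        subst hwv
        exact certB' ⟨by omega, by unfold lk; omega⟩
      · exact certA' (by unfold lk; omega) ⟨by omega, by unfold lk; omega⟩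
      · exact certC' ((u:ℕ)+m+1) (by omega) ⟨by omega, by unfold lk; omega⟩
          ⟨by omega, by unfold lk; omega⟩ (by unfold lk; omega) (by omega)
          (by intro y; unfold lk; omega)
      · exact certC' ((u:ℕ)+3*m) (by omega) ⟨by omega, by unfold lk; omega⟩
          ⟨by omega, by unfold lk; omega⟩ (by unfold lk; omega) (by omega)
          (by intro y; unfold lk; omega)
      · exact certA' (by unfold lk; omega) ⟨by omega, by unfold lk; omega⟩
    · rcases lt_or_ge (u : ℕ) (2*m) with hc2 | hc2
      · -- m ≤ u ≤ 2m-1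
        refine card8 u v ((u:ℕ)-2) ((u:ℕ)-1) (u:ℕ) ((u:ℕ)+1) ((u:ℕ)+m-1) ((u:ℕ)+m)
            ((u:ℕ)+m+1) ((u:ℕ)+m+2) (by omega) (by omega) ?_
        intro w hw
        rcases hw with h | h | h | h | h | h | h | h
        · exact certC ((u:ℕ)-1) (by omega) ⟨by omega, by unfold lk; omega⟩
            ⟨by omega, by unfold lk; omega⟩ (by unfold lk; omega) (by omega)
            (by intro y; unfold lk; omega)
        · exact certA ⟨by omega, by unfold lk; omega⟩ (by unfold lk; omega)
        · have hwu : w = u := Fin.ext h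
          subst hwu
          exact certB ⟨by omega, by unfold lk; omega⟩
        · exact certA ⟨by omega, by unfold lk; omega⟩ (by unfold lk; omega)
        · exact certA' (by unfold lk; omega) ⟨by omega, by unfold lk; omega⟩
        · have hwv : w = v := Fin.ext (by omega)
          subst hwv
          exact certB' ⟨by omega, by unfold lk; omega⟩
        · exact certA' (by unfold lk; omega) ⟨by omega, by unfold lk; omega⟩
        · exact certC' ((u:ℕ)+m+1) (by omega) ⟨by omega, by unfold lk; omega⟩
            ⟨by omega, by unfold lk; omega⟩ (by unfold lk; omega) (by omega)
            (by intro y; unfold lk; omega)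
      · -- 2m ≤ u ≤ 3m-1
        refine card8 u v ((u:ℕ)-2*m) ((u:ℕ)-2*m+1) ((u:ℕ)-2) ((u:ℕ)-1) (u:ℕ) ((u:ℕ)+1)
            ((u:ℕ)+m-1) ((u:ℕ)+m) (by omega) (by omega) ?_
        intro w hw
        rcases hw with h | h | h | h | h | h | h | h
        · exact certA ⟨by omega, by unfold lk; omega⟩ (by unfold lk; omega)
        · exact certC ((u:ℕ)-2*m) (by omega) ⟨by omega, by unfold lk; omega⟩
            ⟨by omega, by unfold lk; omega⟩ (by unfold lk; omega) (by omega)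
            (by intro y; unfold lk; omega)
        · exact certC ((u:ℕ)-1) (by omega) ⟨by omega, by unfold lk; omega⟩
            ⟨by omega, by unfold lk; omega⟩ (by unfold lk; omega) (by omega)
            (by intro y; unfold lk; omega)
        · exact certA ⟨by omega, by unfold lk; omega⟩ (by unfold lk; omega)
        · have hwu : w = u := Fin.ext h
          subst hwu
          exact certB ⟨by omega, by unfold lk; omega⟩
        · exact certA ⟨by omega, by unfold lk; omega⟩ (by unfold lk; omega)
        · exact certA' (by unfold lk; omega) ⟨by omega, by unfold lk; omega⟩
        · have hwv : w = v := Fin.ext (by omega)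
          subst hwv
          exact certB' ⟨by omega, by unfold lk; omega⟩
  · -- v = u + 2m
    rcases lt_or_ge (u : ℕ) m with hc | hc
    · -- u ≤ m-1
      refine card8 u v (u:ℕ) ((u:ℕ)+1) ((u:ℕ)+2) ((u:ℕ)+2*m-2) ((u:ℕ)+2*m-1) ((u:ℕ)+2*m)
          ((u:ℕ)+2*m+1) ((u:ℕ)+3*m) (by omega) (by omega) ?_
      intro w hw
      rcases hw with h | h | h | h | h | h | h | h
      · have hwu : w = u := Fin.ext h
        subst hwu
        exact certB ⟨by omega, by unfold lk; omega⟩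
      · exact certA ⟨by omega, by unfold lk; omega⟩ (by unfold lk; omega)
      · exact certC ((u:ℕ)+1) (by omega) ⟨by omega, by unfold lk; omega⟩
          ⟨by omega, by unfold lk; omega⟩ (by unfold lk; omega) (by omega)
          (by intro y; unfold lk; omega)
      · exact certC' ((u:ℕ)+2*m-1) (by omega) ⟨by omega, by unfold lk; omega⟩
          ⟨by omega, by unfold lk; omega⟩ (by unfold lk; omega) (by omega)
          (by intro y; unfold lk; omega)
      · exact certA' (by unfold lk; omega) ⟨by omega, by unfold lk; omega⟩
      · have hwv : w = v := Fin.ext (by omega)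
        subst hwv
        exact certB' ⟨by omega, by unfold lk; omega⟩
      · exact certA' (by unfold lk; omega) ⟨by omega, by unfold lk; omega⟩
      · exact certA' (by unfold lk; omega) ⟨by omega, by unfold lk; omega⟩
    · -- m ≤ u ≤ 2m-1
      refine card8 u v ((u:ℕ)-m) ((u:ℕ)-1) (u:ℕ) ((u:ℕ)+1) ((u:ℕ)+2) ((u:ℕ)+2*m-2)
          ((u:ℕ)+2*m-1) ((u:ℕ)+2*m) (by omega) (by omega) ?_
      intro w hw
      rcases hw with h | h | h | h | h | h | h | h
      · exact certA ⟨by omega, by unfold lk; omega⟩ (by unfold lk; omega)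
      · exact certA ⟨by omega, by unfold lk; omega⟩ (by unfold lk; omega)
      · have hwu : w = u := Fin.ext h
        subst hwu
        exact certB ⟨by omega, by unfold lk; omega⟩
      · exact certA ⟨by omega, by unfold lk; omega⟩ (by unfold lk; omega)
      · exact certC ((u:ℕ)+1) (by omega) ⟨by omega, by unfold lk; omega⟩
          ⟨by omega, by unfold lk; omega⟩ (by unfold lk; omega) (by omega)
          (by intro y; unfold lk; omega)
      · exact certC' ((u:ℕ)+2*m-1) (by omega) ⟨by omega, by unfold lk; omega⟩
          ⟨by omega, by unfold lk; omega⟩ (by unfold lk; omega) (by omega)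
          (by intro y; unfold lk; omega)
      · exact certA' (by unfold lk; omega) ⟨by omega, by unfold lk; omega⟩
      · have hwv : w = v := Fin.ext (by omega)
        subst hwv
        exact certB' ⟨by omega, by unfold lk; omega⟩

lemma eight_le (hm : 4 ≤ m) (hN : N = 4*m) (u v : Fin N) (huv : (TG m N).Adj u v) :
    8 ≤ (Finset.univ.filter
      (fun w => (TG m N).dist w u ≠ (TG m N).dist w v)).card := by
  obtain ⟨hne, hd⟩ := adj_iff.1 huv
  rcases lt_or_ge (u : ℕ) (v : ℕ) with hlt | hle
  · exact eight_le_aux hm hN u v hlt (by unfold lk at hd; omega)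
  · have hlt : (v : ℕ) < (u : ℕ) := by omega
    have h8 := eight_le_aux hm hN v u hlt (by unfold lk at hd; omega)
    have heq : (Finset.univ.filter
        (fun w => (TG m N).dist w u ≠ (TG m N).dist w v)) =
        (Finset.univ.filter (fun w => (TG m N).dist w v ≠ (TG m N).dist w u)) :=
      Finset.filter_congr (fun w _ => ne_comm)
    rwa [heq]

/-! ### The upper bound: the constant function 1/8 is a local resolving function -/

lemma const_lrf (hm : 4 ≤ m) (hN : N = 4*m) :
    IsLocalResolvingFunction (TG m N) (fun _ => (1/8 : ℝ)) := by
  constructor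
  · intro w
    constructor <;> norm_num
  · intro u v huv
    have h8 := eight_le hm hN u v huv
    rw [Finset.sum_const, nsmul_eq_mul]
    have h8' : (8 : ℝ) ≤ ((Finset.univ.filter
        (fun w => (TG m N).dist w u ≠ (TG m N).dist w v)).card : ℝ) := by
      exact_mod_cast h8
    linarith

/-! ### The lower bound machinery -/

lemma pair_ineq {V : Type*} [Fintype V] (G : SimpleGraph V) (ζ : V → ℝ)
    (hζ : IsLocalResolvingFunction G ζ) {u v w1 w2 : V} (huv : G.Adj u v)
    (h1 : G.dist w1 u = G.dist w1 v) (h2 : G.dist w2 u = G.dist w2 v) (h12 : w1 ≠ w2) :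
    1 + (ζ w1 + ζ w2) ≤ ∑ x, ζ x := by
  classical
  have hsplit := Finset.sum_filter_add_sum_filter_not Finset.univ
    (fun w => G.dist w u ≠ G.dist w v) ζ
  have hA : 1 ≤ ∑ x ∈ Finset.univ.filter (fun w => G.dist w u ≠ G.dist w v), ζ x := by
    have h := hζ.2 u v huv
    convert h using 3
  have hsub : ({w1, w2} : Finset V) ⊆
      Finset.univ.filter (fun w => ¬ (G.dist w u ≠ G.dist w v)) := by
    intro x hx
    rcases Finset.mem_insert.1 hx with rfl | hx
    · exact Finset.mem_filter.2 ⟨Finset.mem_univ _, not_not.2 h1⟩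
    · rw [Finset.mem_singleton] at hx
      subst hx
      exact Finset.mem_filter.2 ⟨Finset.mem_univ _, not_not.2 h2⟩
  have hB : ζ w1 + ζ w2 ≤
      ∑ x ∈ Finset.univ.filter (fun w => ¬ (G.dist w u ≠ G.dist w v)), ζ x := by
    rw [← Finset.sum_pair h12]
    exact Finset.sum_le_sum_of_subset_of_nonneg hsub (fun i _ _ => (hζ.1 i).1)
  linarith

/-- equal distances, both equal to 1 -/
lemma deq11 {w e1 e2 : Fin N}
    (h1 : (w : ℕ) ≠ (e1 : ℕ) ∧ lk m (w : ℕ) (e1 : ℕ))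
    (h2 : (w : ℕ) ≠ (e2 : ℕ) ∧ lk m (w : ℕ) (e2 : ℕ)) :
    (TG m N).dist w e1 = (TG m N).dist w e2 := by
  rw [d1 h1, d1 h2]

/-- equal distances, both equal to 2 -/
lemma deq22 {w e1 e2 : Fin N} (z1 z2 : ℕ) (hz1 : z1 < N) (hz2 : z2 < N)
    (h1 : (w : ℕ) ≠ z1 ∧ lk m (w : ℕ) z1) (h2 : z1 ≠ (e1 : ℕ) ∧ lk m z1 (e1 : ℕ))
    (h3 : ¬ lk m (w : ℕ) (e1 : ℕ)) (h3n : (w : ℕ) ≠ (e1 : ℕ))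
    (h4 : (w : ℕ) ≠ z2 ∧ lk m (w : ℕ) z2) (h5 : z2 ≠ (e2 : ℕ) ∧ lk m z2 (e2 : ℕ))
    (h6 : ¬ lk m (w : ℕ) (e2 : ℕ)) (h6n : (w : ℕ) ≠ (e2 : ℕ)) :
    (TG m N).dist w e1 = (TG m N).dist w e2 := by
  rw [d2 z1 hz1 h1 h2 h3 h3n, d2 z2 hz2 h4 h5 h6 h6n]

set_option maxHeartbeats 3000000 in
/-- The main per-block inequality used in the lower bound. -/
lemma block_ineq (hm : 4 ≤ m) (hN : N = 4*m) (ζ : Fin N → ℝ)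
    (hζ : IsLocalResolvingFunction (TG m N) ζ) (b : ℕ) (hb : b < m)
    (w0 w1 w2 w3 : Fin N) (e0 : (w0 : ℕ) = 4*b) (e1 : (w1 : ℕ) = 4*b+1)
    (e2 : (w2 : ℕ) = 4*b+2) (e3 : (w3 : ℕ) = 4*b+3) :
    4 + 2*(ζ w0 + ζ w1 + ζ w2 + ζ w3) ≤ 4 * ∑ x, ζ x := by
  have hb4 : 4*b + 4 ≤ N := by omega
  have hcase : 4*b + 4 ≤ 2*m ∨ 4*b = 2*m - 2 ∨ 2*m ≤ 4*b := by omega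
  rcases hcase with hc | hc | hc
  · -- low case : a ≤ 2m-4
    obtain ⟨p1, hp1⟩ : ∃ x : Fin N, (x:ℕ) = 4*b+m := ⟨⟨4*b+m, by omega⟩, rfl⟩
    obtain ⟨q1, hq1⟩ : ∃ x : Fin N, (x:ℕ) = 4*b+2*m := ⟨⟨4*b+2*m, by omega⟩, rfl⟩
    obtain ⟨p2, hp2⟩ : ∃ x : Fin N, (x:ℕ) = 4*b+m+2 := ⟨⟨4*b+m+2, by omega⟩, rfl⟩
    obtain ⟨q2, hq2⟩ : ∃ x : Fin N, (x:ℕ) = 4*b+2*m+2 := ⟨⟨4*b+2*m+2, by omega⟩, rfl⟩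
    obtain ⟨p3, hp3⟩ : ∃ x : Fin N, (x:ℕ) = 4*b+m+1 := ⟨⟨4*b+m+1, by omega⟩, rfl⟩
    obtain ⟨q3, hq3⟩ : ∃ x : Fin N, (x:ℕ) = 4*b+2*m+1 := ⟨⟨4*b+2*m+1, by omega⟩, rfl⟩
    have P1 : 1 + (ζ w0 + ζ w1) ≤ ∑ x, ζ x := by
      refine pair_ineq (TG m N) ζ hζ (u := p1) (v := q1)
        (adj_of ⟨by omega, by unfold lk; omega⟩) ?_ ?_ (Fin.ne_of_val_ne (by omega))
      · exact deq11 ⟨by omega, by unfold lk; omega⟩ ⟨by omega, by unfold lk; omega⟩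
      · exact deq22 (4*b+m+1) (4*b+2*m+1) (by omega) (by omega)
          ⟨by omega, by unfold lk; omega⟩ ⟨by omega, by unfold lk; omega⟩
          (by unfold lk; omega) (by omega)
          ⟨by omega, by unfold lk; omega⟩ ⟨by omega, by unfold lk; omega⟩
          (by unfold lk; omega) (by omega)
    have P2 : 1 + (ζ w1 + ζ w3) ≤ ∑ x, ζ x := by
      refine pair_ineq (TG m N) ζ hζ (u := p2) (v := q2)
        (adj_of ⟨by omega, by unfold lk; omega⟩) ?_ ?_ (Fin.ne_of_val_ne (by omega))
      · exact deq22 (4*b+m+1) (4*b+2*m+1) (by omega) (by omega)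
          ⟨by omega, by unfold lk; omega⟩ ⟨by omega, by unfold lk; omega⟩
          (by unfold lk; omega) (by omega)
          ⟨by omega, by unfold lk; omega⟩ ⟨by omega, by unfold lk; omega⟩
          (by unfold lk; omega) (by omega)
      · exact deq22 (4*b+m+3) (4*b+2*m+3) (by omega) (by omega)
          ⟨by omega, by unfold lk; omega⟩ ⟨by omega, by unfold lk; omega⟩
          (by unfold lk; omega) (by omega)
          ⟨by omega, by unfold lk; omega⟩ ⟨by omega, by unfold lk; omega⟩
          (by unfold lk; omega) (by omega)
    have P3 : 1 + (ζ w2 + ζ w3) ≤ ∑ x, ζ x := by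
      refine pair_ineq (TG m N) ζ hζ (u := p2) (v := q2)
        (adj_of ⟨by omega, by unfold lk; omega⟩) ?_ ?_ (Fin.ne_of_val_ne (by omega))
      · exact deq11 ⟨by omega, by unfold lk; omega⟩ ⟨by omega, by unfold lk; omega⟩
      · exact deq22 (4*b+m+3) (4*b+2*m+3) (by omega) (by omega)
          ⟨by omega, by unfold lk; omega⟩ ⟨by omega, by unfold lk; omega⟩
          (by unfold lk; omega) (by omega)
          ⟨by omega, by unfold lk; omega⟩ ⟨by omega, by unfold lk; omega⟩
          (by unfold lk; omega) (by omega)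
    have P4 : 1 + (ζ w0 + ζ w2) ≤ ∑ x, ζ x := by
      refine pair_ineq (TG m N) ζ hζ (u := p3) (v := q3)
        (adj_of ⟨by omega, by unfold lk; omega⟩) ?_ ?_ (Fin.ne_of_val_ne (by omega))
      · exact deq22 (4*b+m) (4*b+2*m) (by omega) (by omega)
          ⟨by omega, by unfold lk; omega⟩ ⟨by omega, by unfold lk; omega⟩
          (by unfold lk; omega) (by omega)
          ⟨by omega, by unfold lk; omega⟩ ⟨by omega, by unfold lk; omega⟩
          (by unfold lk; omega) (by omega)
      · exact deq22 (4*b+m+2) (4*b+2*m+2) (by omega) (by omega)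
          ⟨by omega, by unfold lk; omega⟩ ⟨by omega, by unfold lk; omega⟩
          (by unfold lk; omega) (by omega)
          ⟨by omega, by unfold lk; omega⟩ ⟨by omega, by unfold lk; omega⟩
          (by unfold lk; omega) (by omega)
    linarith
  · -- middle case : a = 2m-2
    obtain ⟨p1, hp1⟩ : ∃ x : Fin N, (x:ℕ) = 4*b+m := ⟨⟨4*b+m, by omega⟩, rfl⟩
    obtain ⟨q1, hq1⟩ : ∃ x : Fin N, (x:ℕ) = 4*b+2*m := ⟨⟨4*b+2*m, by omega⟩, rfl⟩
    obtain ⟨p2, hp2⟩ : ∃ x : Fin N, (x:ℕ) = 4*b+2-2*m := ⟨⟨4*b+2-2*m, by omega⟩, rfl⟩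
    obtain ⟨q2, hq2⟩ : ∃ x : Fin N, (x:ℕ) = 4*b+2-m := ⟨⟨4*b+2-m, by omega⟩, rfl⟩
    obtain ⟨p3, hp3⟩ : ∃ x : Fin N, (x:ℕ) = m-1 := ⟨⟨m-1, by omega⟩, rfl⟩
    obtain ⟨q3, hq3⟩ : ∃ x : Fin N, (x:ℕ) = 3*m-1 := ⟨⟨3*m-1, by omega⟩, rfl⟩
    have P1 : 1 + (ζ w0 + ζ w1) ≤ ∑ x, ζ x := by
      refine pair_ineq (TG m N) ζ hζ (u := p1) (v := q1)
        (adj_of ⟨by omega, by unfold lk; omega⟩) ?_ ?_ (Fin.ne_of_val_ne (by omega))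
      · exact deq11 ⟨by omega, by unfold lk; omega⟩ ⟨by omega, by unfold lk; omega⟩
      · exact deq22 (4*b+m+1) (4*b+2*m+1) (by omega) (by omega)
          ⟨by omega, by unfold lk; omega⟩ ⟨by omega, by unfold lk; omega⟩
          (by unfold lk; omega) (by omega)
          ⟨by omega, by unfold lk; omega⟩ ⟨by omega, by unfold lk; omega⟩
          (by unfold lk; omega) (by omega)
    have P2 : 1 + (ζ w1 + ζ w3) ≤ ∑ x, ζ x := by
      refine pair_ineq (TG m N) ζ hζ (u := p2) (v := q2)
        (adj_of ⟨by omega, by unfold lk; omega⟩) ?_ ?_ (Fin.ne_of_val_ne (by omega))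
      · exact deq22 (4*b+2) (4*b+1-m) (by omega) (by omega)
          ⟨by omega, by unfold lk; omega⟩ ⟨by omega, by unfold lk; omega⟩
          (by unfold lk; omega) (by omega)
          ⟨by omega, by unfold lk; omega⟩ ⟨by omega, by unfold lk; omega⟩
          (by unfold lk; omega) (by omega)
      · exact deq22 (4*b+3-2*m) (4*b+3-m) (by omega) (by omega)
          ⟨by omega, by unfold lk; omega⟩ ⟨by omega, by unfold lk; omega⟩
          (by unfold lk; omega) (by omega)
          ⟨by omega, by unfold lk; omega⟩ ⟨by omega, by unfold lk; omega⟩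
          (by unfold lk; omega) (by omega)
    have P3 : 1 + (ζ w2 + ζ w3) ≤ ∑ x, ζ x := by
      refine pair_ineq (TG m N) ζ hζ (u := p2) (v := q2)
        (adj_of ⟨by omega, by unfold lk; omega⟩) ?_ ?_ (Fin.ne_of_val_ne (by omega))
      · exact deq11 ⟨by omega, by unfold lk; omega⟩ ⟨by omega, by unfold lk; omega⟩
      · exact deq22 (4*b+3-2*m) (4*b+3-m) (by omega) (by omega)
          ⟨by omega, by unfold lk; omega⟩ ⟨by omega, by unfold lk; omega⟩
          (by unfold lk; omega) (by omega)
          ⟨by omega, by unfold lk; omega⟩ ⟨by omega, by unfold lk; omega⟩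
          (by unfold lk; omega) (by omega)
    have P4 : 1 + (ζ w0 + ζ w2) ≤ ∑ x, ζ x := by
      refine pair_ineq (TG m N) ζ hζ (u := p3) (v := q3)
        (adj_of ⟨by omega, by unfold lk; omega⟩) ?_ ?_ (Fin.ne_of_val_ne (by omega))
      · exact deq22 (2*m-1) (2*m-1) (by omega) (by omega)
          ⟨by omega, by unfold lk; omega⟩ ⟨by omega, by unfold lk; omega⟩
          (by unfold lk; omega) (by omega)
          ⟨by omega, by unfold lk; omega⟩ ⟨by omega, by unfold lk; omega⟩
          (by unfold lk; omega) (by omega)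
      · exact deq22 (2*m-1) (2*m-1) (by omega) (by omega)
          ⟨by omega, by unfold lk; omega⟩ ⟨by omega, by unfold lk; omega⟩
          (by unfold lk; omega) (by omega)
          ⟨by omega, by unfold lk; omega⟩ ⟨by omega, by unfold lk; omega⟩
          (by unfold lk; omega) (by omega)
    linarith
  · -- high case : a ≥ 2m
    obtain ⟨p1, hp1⟩ : ∃ x : Fin N, (x:ℕ) = 4*b-2*m := ⟨⟨4*b-2*m, by omega⟩, rfl⟩
    obtain ⟨q1, hq1⟩ : ∃ x : Fin N, (x:ℕ) = 4*b-m := ⟨⟨4*b-m, by omega⟩, rfl⟩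
    obtain ⟨p2, hp2⟩ : ∃ x : Fin N, (x:ℕ) = 4*b+2-2*m := ⟨⟨4*b+2-2*m, by omega⟩, rfl⟩
    obtain ⟨q2, hq2⟩ : ∃ x : Fin N, (x:ℕ) = 4*b+2-m := ⟨⟨4*b+2-m, by omega⟩, rfl⟩
    obtain ⟨p3, hp3⟩ : ∃ x : Fin N, (x:ℕ) = 4*b+1-2*m := ⟨⟨4*b+1-2*m, by omega⟩, rfl⟩
    obtain ⟨q3, hq3⟩ : ∃ x : Fin N, (x:ℕ) = 4*b+1-m := ⟨⟨4*b+1-m, by omega⟩, rfl⟩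
    have P1 : 1 + (ζ w0 + ζ w1) ≤ ∑ x, ζ x := by
      refine pair_ineq (TG m N) ζ hζ (u := p1) (v := q1)
        (adj_of ⟨by omega, by unfold lk; omega⟩) ?_ ?_ (Fin.ne_of_val_ne (by omega))
      · exact deq11 ⟨by omega, by unfold lk; omega⟩ ⟨by omega, by unfold lk; omega⟩
      · exact deq22 (4*b+1-2*m) (4*b+1-m) (by omega) (by omega)
          ⟨by omega, by unfold lk; omega⟩ ⟨by omega, by unfold lk; omega⟩
          (by unfold lk; omega) (by omega)
          ⟨by omega, by unfold lk; omega⟩ ⟨by omega, by unfold lk; omega⟩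
          (by unfold lk; omega) (by omega)
    have P2 : 1 + (ζ w1 + ζ w3) ≤ ∑ x, ζ x := by
      refine pair_ineq (TG m N) ζ hζ (u := p2) (v := q2)
        (adj_of ⟨by omega, by unfold lk; omega⟩) ?_ ?_ (Fin.ne_of_val_ne (by omega))
      · exact deq22 (4*b+1-2*m) (4*b+1-m) (by omega) (by omega)
          ⟨by omega, by unfold lk; omega⟩ ⟨by omega, by unfold lk; omega⟩
          (by unfold lk; omega) (by omega)
          ⟨by omega, by unfold lk; omega⟩ ⟨by omega, by unfold lk; omega⟩
          (by unfold lk; omega) (by omega)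
      · exact deq22 (4*b+3-2*m) (4*b+3-m) (by omega) (by omega)
          ⟨by omega, by unfold lk; omega⟩ ⟨by omega, by unfold lk; omega⟩
          (by unfold lk; omega) (by omega)
          ⟨by omega, by unfold lk; omega⟩ ⟨by omega, by unfold lk; omega⟩
          (by unfold lk; omega) (by omega)
    have P3 : 1 + (ζ w2 + ζ w3) ≤ ∑ x, ζ x := by
      refine pair_ineq (TG m N) ζ hζ (u := p2) (v := q2)
        (adj_of ⟨by omega, by unfold lk; omega⟩) ?_ ?_ (Fin.ne_of_val_ne (by omega))
      · exact deq11 ⟨by omega, by unfold lk; omega⟩ ⟨by omega, by unfold lk; omega⟩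
      · exact deq22 (4*b+3-2*m) (4*b+3-m) (by omega) (by omega)
          ⟨by omega, by unfold lk; omega⟩ ⟨by omega, by unfold lk; omega⟩
          (by unfold lk; omega) (by omega)
          ⟨by omega, by unfold lk; omega⟩ ⟨by omega, by unfold lk; omega⟩
          (by unfold lk; omega) (by omega)
    have P4 : 1 + (ζ w0 + ζ w2) ≤ ∑ x, ζ x := by
      refine pair_ineq (TG m N) ζ hζ (u := p3) (v := q3)
        (adj_of ⟨by omega, by unfold lk; omega⟩) ?_ ?_ (Fin.ne_of_val_ne (by omega))
      · exact deq22 (4*b-2*m) (4*b-m) (by omega) (by omega)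
          ⟨by omega, by unfold lk; omega⟩ ⟨by omega, by unfold lk; omega⟩
          (by unfold lk; omega) (by omega)
          ⟨by omega, by unfold lk; omega⟩ ⟨by omega, by unfold lk; omega⟩
          (by unfold lk; omega) (by omega)
      · exact deq22 (4*b+2-2*m) (4*b+2-m) (by omega) (by omega)
          ⟨by omega, by unfold lk; omega⟩ ⟨by omega, by unfold lk; omega⟩
          (by unfold lk; omega) (by omega)
          ⟨by omega, by unfold lk; omega⟩ ⟨by omega, by unfold lk; omega⟩
          (by unfold lk; omega) (by omega)
    linarith

/-- splitting a sum over `range (4*M)` into blocks of 4 -/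
lemma sum_four_blocks (F : ℕ → ℝ) (M : ℕ) :
    ∑ i ∈ Finset.range (4*M), F i =
      ∑ b ∈ Finset.range M, (F (4*b) + F (4*b+1) + F (4*b+2) + F (4*b+3)) := by
  induction M with
  | zero => simp
  | succ M ih =>
    have h4 : 4*(M+1) = (4*M+1+1+1)+1 := by ring
    rw [h4, Finset.sum_range_succ, Finset.sum_range_succ, Finset.sum_range_succ,
      Finset.sum_range_succ, Finset.sum_range_succ, ih]
    ring

/-- The lower bound for any local resolving function. -/
lemma lower_bound_sum (hm : 4 ≤ m) (hN : N = 4*m) (ζ : Fin N → ℝ)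
    (hζ : IsLocalResolvingFunction (TG m N) ζ) :
    (N : ℝ) / ((N : ℝ) - 2) ≤ ∑ x, ζ x := by
  set s := ∑ x, ζ x with hs
  have hs0 : 0 ≤ s := Finset.sum_nonneg (fun i _ => (hζ.1 i).1)
  set F : ℕ → ℝ := fun x => if h : x < N then ζ ⟨x, h⟩ else 0 with hF
  have hFsum : ∑ i ∈ Finset.range N, F i = s := by
    rw [← Fin.sum_univ_eq_sum_range F N]
    apply Finset.sum_congr rfl
    intro i _
    simp [hF, i.isLt]
  have hblocks : ∀ b ∈ Finset.range m,
      4 + 2*(F (4*b) + F (4*b+1) + F (4*b+2) + F (4*b+3)) ≤ 4 * s := by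
    intro b hb
    rw [Finset.mem_range] at hb
    have h0 : 4*b < N := by omega
    have h1 : 4*b+1 < N := by omega
    have h2 : 4*b+2 < N := by omega
    have h3 : 4*b+3 < N := by omega
    have hkey := block_ineq hm hN ζ hζ b hb ⟨4*b, h0⟩ ⟨4*b+1, h1⟩ ⟨4*b+2, h2⟩ ⟨4*b+3, h3⟩
      rfl rfl rfl rfl
    simpa only [hF, h0, h1, h2, h3, dif_pos] using hkey
  have hsumineq := Finset.sum_le_sum hblocks
  rw [Finset.sum_add_distrib] at hsumineq
  have hsplit : (∑ b ∈ Finset.range m, 2*(F (4*b) + F (4*b+1) + F (4*b+2) + F (4*b+3)))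
      = 2 * s := by
    rw [← Finset.mul_sum, ← sum_four_blocks F m, ← hN, hFsum]
  rw [hsplit, Finset.sum_const, Finset.card_range, Finset.sum_const, Finset.card_range,
    nsmul_eq_mul, nsmul_eq_mul] at hsumineq
  have hmR : (4 : ℝ) ≤ (m : ℝ) := by exact_mod_cast hm
  have hNR : (N : ℝ) = 4 * (m : ℝ) := by exact_mod_cast hN
  rw [hNR, div_le_iff₀ (by nlinarith)]
  nlinarith

end LdimfAux

open LdimfAux in
/-- For every integer `k ≥ 4`,
`2^k/(2^k-2) ≤ ldimf(T_{2^k}⟨{1, 2^(k-2), 2^(k-1)}⟩) ≤ 2^k/8 = 2^(k-3)`. -/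
theorem ldimf_toeplitz_pow_two (k : ℕ) (hk : 4 ≤ k) :
    (2 : ℝ) ^ k / ((2 : ℝ) ^ k - 2)
        ≤ ldimf (toeplitzGraph (2 ^ k) {1, 2 ^ (k - 2), 2 ^ (k - 1)}) ∧
      ldimf (toeplitzGraph (2 ^ k) {1, 2 ^ (k - 2), 2 ^ (k - 1)}) ≤ (2 : ℝ) ^ k / 8 ∧
      (2 : ℝ) ^ k / 8 = (2 : ℝ) ^ (k - 3) := by
  have hm : 4 ≤ 2 ^ (k - 2) := by
    calc (4 : ℕ) = 2 ^ 2 := by norm_num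
    _ ≤ 2 ^ (k - 2) := Nat.pow_le_pow_right (by norm_num) (by omega)
  have hN : (2 : ℕ) ^ k = 4 * 2 ^ (k - 2) := by
    calc (2 : ℕ) ^ k = 2 ^ ((k - 2) + 2) := by rw [show (k - 2) + 2 = k by omega]
    _ = 2 ^ (k - 2) * 2 ^ 2 := pow_add 2 _ 2
    _ = 4 * 2 ^ (k - 2) := by ring
  have h2m : (2 : ℕ) ^ (k - 1) = 2 * 2 ^ (k - 2) := by
    calc (2 : ℕ) ^ (k - 1) = 2 ^ ((k - 2) + 1) := by rw [show (k - 2) + 1 = k - 1 by omega]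
    _ = 2 ^ (k - 2) * 2 := pow_succ 2 _
    _ = 2 * 2 ^ (k - 2) := by ring
  have hgraph : toeplitzGraph (2 ^ k) {1, 2 ^ (k - 2), 2 ^ (k - 1)} =
      TG (2 ^ (k - 2)) (2 ^ k) := by
    unfold TG
    rw [h2m]
  rw [hgraph]
  have hNR : (((2 : ℕ) ^ k : ℕ) : ℝ) = (2 : ℝ) ^ k := by push_cast; ring
  have hlrf := const_lrf hm hN
  have hsum : (∑ _v : Fin (2 ^ k), (1/8 : ℝ)) = (((2 : ℕ) ^ k : ℕ) : ℝ) / 8 := by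
    rw [Finset.sum_const, Finset.card_univ, Fintype.card_fin, nsmul_eq_mul]
    ring
  have hmem : (((2 : ℕ) ^ k : ℕ) : ℝ) / 8 ∈
      {s : ℝ | ∃ ζ : Fin (2 ^ k) → ℝ,
        IsLocalResolvingFunction (TG (2 ^ (k - 2)) (2 ^ k)) ζ ∧ s = ∑ v, ζ v} :=
    ⟨fun _ => (1/8 : ℝ), hlrf, hsum.symm⟩
  have hbdd : BddBelow
      {s : ℝ | ∃ ζ : Fin (2 ^ k) → ℝ,
        IsLocalResolvingFunction (TG (2 ^ (k - 2)) (2 ^ k)) ζ ∧ s = ∑ v, ζ v} := by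
    refine ⟨0, fun s hs => ?_⟩
    obtain ⟨ζ, hζ, rfl⟩ := hs
    exact Finset.sum_nonneg (fun i _ => (hζ.1 i).1)
  refine ⟨?_, ?_, ?_⟩
  · rw [← hNR]
    unfold ldimf
    apply le_csInf ⟨(((2 : ℕ) ^ k : ℕ) : ℝ) / 8, hmem⟩
    rintro s ⟨ζ, hζ, rfl⟩
    exact lower_bound_sum hm hN ζ hζ
  · rw [← hNR]
    unfold ldimf
    exact csInf_le hbdd hmem
  · have hk3 : (2 : ℝ) ^ k = 2 ^ (k - 3) * 8 := by
      calc (2 : ℝ) ^ k = 2 ^ ((k - 3) + 3) := by rw [show (k - 3) + 3 = k by omega]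
      _ = 2 ^ (k - 3) * 2 ^ 3 := pow_add 2 _ 3
      _ = 2 ^ (k - 3) * 8 := by norm_num
    rw [hk3]
    field_simp
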